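/- Let Q be a real symmetric n×n matrix, c ∈ ℝⁿ, and define f(x) = xᵀQx + cᵀx. If Q_ii ≤ 0 for some index i, then there exists a minimizer x* of f over the finite set {0, −1, 1}ⁿ with x*_i ∈ {−1, 1}. -/

import Mathlib

open Matrix

theorem stmt_12 (n : ℕ) (Q : Matrix (Fin n) (Fin n) ℝ) (hQsymm : Q.IsSymm)
    (c : Fin n → ℝ) (i : Fin n) (hQ : Q i i ≤ 0) :
    ∃ x : Fin n → ℝ,
      (∀ k, x k = 0 ∨ x k = -1 ∨ x k = 1) ∧
      (x i = -1 ∨ x i = 1) ∧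
      (∀ y : Fin n → ℝ, (∀ k, y k = 0 ∨ y k = -1 ∨ y k = 1) →
        x ⬝ᵥ Q *ᵥ x + c ⬝ᵥ x ≤ y ⬝ᵥ Q *ᵥ y + c ⬝ᵥ y) := by
  classical
  set f : (Fin n → ℝ) → ℝ := fun x => x ⬝ᵥ Q *ᵥ x + c ⬝ᵥ x with hf
  let g : Fin 3 → ℝ := ![0, -1, 1]
  have hgmem : ∀ t : Fin 3, g t = 0 ∨ g t = -1 ∨ g t = 1 := by
    intro t; fin_cases t <;> norm_num [g]
  obtain ⟨v, -, hv⟩ := Finset.exists_min_image (Finset.univ : Finset (Fin n → Fin 3))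
    (fun v => f (g ∘ v)) ⟨fun _ => 0, Finset.mem_univ _⟩
  set y : Fin n → ℝ := g ∘ v with hy
  have hyval : ∀ k, y k = 0 ∨ y k = -1 ∨ y k = 1 := fun k => hgmem (v k)
  have hymin : ∀ z, (∀ k, z k = 0 ∨ z k = -1 ∨ z k = 1) → f y ≤ f z := by
    intro z hz
    have : ∃ w : Fin n → Fin 3, z = g ∘ w := by
      refine ⟨fun k => if z k = 0 then 0 else if z k = -1 then 1 else 2, ?_⟩
      funext k
      rcases hz k with h | h | h <;> simp [h, g] <;> norm_num <;> rfl
    obtain ⟨w, rfl⟩ := this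
    exact hv w (Finset.mem_univ w)
  rcases hyval i with hyi | hyi | hyi
  · -- flip the i-th coordinate
    obtain ⟨s, hs1, hs2⟩ : ∃ s : ℝ, (s = -1 ∨ s = 1) ∧ s * (2 * (Q *ᵥ y) i + c i) ≤ 0 := by
      rcases le_or_gt 0 (2 * (Q *ᵥ y) i + c i) with h | h
      · exact ⟨-1, Or.inl rfl, by nlinarith⟩
      · exact ⟨1, Or.inr rfl, by nlinarith⟩
    have hupd : Function.update y i s = y + s • (Pi.single i 1 : Fin n → ℝ) := by
      funext k
      by_cases hk : k = i
      · subst hk; simp [hyi]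
      · simp [Function.update_of_ne hk, Pi.single_eq_of_ne hk]
    have hsym : y ⬝ᵥ Q *ᵥ Pi.single i 1 = (Q *ᵥ y) i := by
      rw [Matrix.dotProduct_mulVec, ← Matrix.mulVec_transpose, hQsymm.eq,
        dotProduct_single]
      simp
    have hsingleQ : (Pi.single i 1 : Fin n → ℝ) ⬝ᵥ Q *ᵥ Pi.single i 1 = Q i i := by
      rw [single_dotProduct]
      simp [Matrix.mulVec_single]
    have key : f (Function.update y i s)
        = f y + s * (2 * (Q *ᵥ y) i + c i) + s ^ 2 * Q i i := by
      rw [hupd]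
      simp only [hf, Matrix.mulVec_add, Matrix.mulVec_smul, dotProduct_add,
        add_dotProduct, dotProduct_smul, smul_dotProduct,
        single_dotProduct, dotProduct_single, hsym, hsingleQ]
      simp [smul_eq_mul]
      ring
    have hs2' : s ^ 2 = 1 := by rcases hs1 with rfl | rfl <;> norm_num
    have hle : f (Function.update y i s) ≤ f y := by
      rw [key, hs2']
      nlinarith
    refine ⟨Function.update y i s, ?_, ?_, ?_⟩
    · intro k
      by_cases hk : k = i
      · subst hk; rcases hs1 with rfl | rfl <;> simp
      · simp only [Function.update_of_ne hk]; exact hyval k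
    · simp [hs1]
    · intro z hz
      exact le_trans hle (hymin z hz)
  · exact ⟨y, hyval, Or.inl hyi, hymin⟩
  · exact ⟨y, hyval, Or.inr hyi, hymin⟩
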